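/- (Matrix identity, Eq. (48).) Let τ ∈ [0,1]^N, let a parallel gate configuration be given by F, D, S, B, and suppose there is an index i with i ∉ D and τ_i = τ_max > 0. Define τ' ∈ ℝ^N by τ'_l = τ_l/2 for l ∈ F ∪ S, τ'_j = 0 for j ∈ D, and τ'_s = τ'_t = max(τ_s,τ_t)/2 for each {s,t} ∈ B. For each {s,t} ∈ B let Δ^(st)_τ be the diagonal matrix with entry δ_{τ_s, max(τ_s,τ_t)} in position s, entry δ_{τ_t, max(τ_s,τ_t)} in position t, and 1 elsewhere. Then Δ_{τ'} · ( ∏_{k∈S} S_k(ω_k) · ∏_{{s,t}∈B} B_st(R_st,T_st) Δ^(st)_τ ) = ( ∏_{j∈D} (1−P_j) · ∏_{k∈S} S_k(ω_k) · ∏_{{s,t}∈B} B_st(R_st,T_st) ) · Δ_τ. -/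

import Mathlib

open MeasureTheory
open scoped Classical

namespace SPI

/-! ## Ontology -/

/-- Ontic states: particle position `q`, field amplitudes `u`, field strengths `τ`. -/
abbrev Lam (N : ℕ) := Fin N × (Fin N → ℂ) × (Fin N → ℝ)

/-- The constraint region of `Λ`: `|u j| ≤ 1` and `τ j ∈ [0,1]`. -/
def onticSet (N : ℕ) : Set (Lam N) :=
  {l | (∀ j, ‖l.2.1 j‖ ≤ 1) ∧ ∀ j, l.2.2 j ∈ Set.Icc (0 : ℝ) 1}

/-- Highest field strength `τ_max`. -/
noncomputable def tmax {N : ℕ} (τ : Fin N → ℝ) : ℝ := ⨆ j, τ j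

/-- `Δ_τ u` : the amplitude vector with only maximal-strength entries retained. -/
noncomputable def deltaVec {N : ℕ} (τ : Fin N → ℝ) (u : Fin N → ℂ) : Fin N → ℂ :=
  fun j => if τ j = tmax τ then u j else 0

/-- Proportionality `z ∼ z'` of complex vectors (a nonzero multiple). -/
def Propto {N : ℕ} (v w : Fin N → ℂ) : Prop := ∃ α : ℂ, α ≠ 0 ∧ v = α • w

/-- The subset `Λ_z^i` of the ontic state space. -/
def lamSet {N : ℕ} (z : Fin N → ℂ) (i : Fin N) : Set (Lam N) :=
  {l | l.1 = i ∧ l.2.2 i = tmax l.2.2 ∧ 0 < tmax l.2.2 ∧ Propto (deltaVec l.2.2 l.2.1) z}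

/-- Membership in the auxiliary class `[z]_i`: a (Borel) probability measure giving
full measure to `Λ_z^i`. -/
def memClassI {N : ℕ} (z : Fin N → ℂ) (i : Fin N) (μ : Measure (Lam N)) : Prop :=
  IsProbabilityMeasure μ ∧ μ (lamSet z i) = 1

/-- Membership in the class `[z]` (for a unit vector `z`): mixtures `∑ |z i|² • pᵢ`
with `pᵢ ∈ [z]_i` (terms with `z i = 0` omitted). -/
def memClass {N : ℕ} (z : Fin N → ℂ) (μ : Measure (Lam N)) : Prop :=
  ∃ f : Fin N → Measure (Lam N),
    (∀ i, z i ≠ 0 → memClassI z i (f i)) ∧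
    μ = ∑ i, ENNReal.ofReal (‖z i‖ ^ 2) • f i

/-- The `j`-th standard basis vector of `ℂ^N`. -/
def eVec {N : ℕ} (j : Fin N) : Fin N → ℂ := fun m => if m = j then 1 else 0

/-! ## Parallel gate configurations -/

/-- A parallel gate configuration: a partition of the paths `{1,…,N}` into free paths `Fr`,
detector paths `De`, phase-shifter paths `Sh` (phases `ω`), and a collection `Bs` of pairwise
disjoint pairs (beam splitters with constants `R`, `T`, `R + T = 1`). -/
structure Config (N : ℕ) where
  Fr : Finset (Fin N)
  De : Finset (Fin N)
  Sh : Finset (Fin N)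
  ω : Fin N → ℝ
  Bs : Finset (Fin N × Fin N)
  R : Fin N × Fin N → ℝ
  T : Fin N × Fin N → ℝ
  hR : ∀ p ∈ Bs, 0 ≤ R p
  hT : ∀ p ∈ Bs, 0 ≤ T p
  hRT : ∀ p ∈ Bs, R p + T p = 1
  hst : ∀ p ∈ Bs, p.1 ≠ p.2
  hBB : ∀ p ∈ Bs, ∀ q ∈ Bs, p ≠ q → p.1 ≠ q.1 ∧ p.1 ≠ q.2 ∧ p.2 ≠ q.1 ∧ p.2 ≠ q.2
  hFD : Disjoint Fr De
  hFS : Disjoint Fr Sh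
  hDS : Disjoint De Sh
  hBdisj : ∀ p ∈ Bs, p.1 ∉ Fr ∧ p.2 ∉ Fr ∧ p.1 ∉ De ∧ p.2 ∉ De ∧ p.1 ∉ Sh ∧ p.2 ∉ Sh
  hcover : ∀ m : Fin N, m ∈ Fr ∨ m ∈ De ∨ m ∈ Sh ∨ ∃ p ∈ Bs, m = p.1 ∨ m = p.2

/-- Path `m` enters some beam splitter of the configuration. -/
def inB {N : ℕ} (c : Config N) (m : Fin N) : Prop := ∃ p ∈ c.Bs, m = p.1 ∨ m = p.2

/-- The new field strengths `τ'` produced by the parallel gates. -/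
noncomputable def newTau {N : ℕ} (c : Config N) (q : Fin N) (τ : Fin N → ℝ) : Fin N → ℝ :=
  fun m =>
    if m ∈ c.De then (if q = m then 1 else 0)
    else if hm : inB c m then max (τ hm.choose.1) (τ hm.choose.2) / 2
    else τ m / 2

/-- The new field amplitudes `u'` produced by the parallel gates. -/
noncomputable def newAmp {N : ℕ} (c : Config N) (q : Fin N) (u : Fin N → ℂ) (τ : Fin N → ℝ) :
    Fin N → ℂ :=
  fun m =>
    if m ∈ c.De then (if q = m then 1 else u m)
    else if m ∈ c.Sh then Complex.exp (Complex.I * (c.ω m : ℂ)) * u m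
    else if hm : inB c m then
      (let p := hm.choose
       let ts := max (τ p.1) (τ p.2)
       let us : ℂ := if τ p.1 = ts then u p.1 else 0
       let ut : ℂ := if τ p.2 = ts then u p.2 else 0
       if m = p.1 then
         Complex.I * (Real.sqrt (c.R p) : ℂ) * us + (Real.sqrt (c.T p) : ℂ) * ut
       else
         (Real.sqrt (c.T p) : ℂ) * us + Complex.I * (Real.sqrt (c.R p) : ℂ) * ut)
    else u m

/-- One step of the dynamics: the Markov kernel `K` of the parallel gate configuration,
as a measure-valued map on ontic states. -/
noncomputable def step {N : ℕ} (c : Config N) (l : Lam N) : Measure (Lam N) :=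
  let q := l.1
  let u' := newAmp c q l.2.1 l.2.2
  let τ' := newTau c q l.2.2
  if hq : inB c q then
    (let p := hq.choose
     let a := ‖u' p.1‖ ^ 2
     let b := ‖u' p.2‖ ^ 2
     if a + b = 0 then Measure.dirac (q, u', τ')
     else ENNReal.ofReal (a / (a + b)) • Measure.dirac (p.1, u', τ')
        + ENNReal.ofReal (b / (a + b)) • Measure.dirac (p.2, u', τ'))
  else Measure.dirac (q, u', τ')

/-- The output measure `pK` of the kernel applied to an input measure `p`. -/
noncomputable def out {N : ℕ} (c : Config N) (μ : Measure (Lam N)) : Measure (Lam N) :=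
  μ.bind (step c)

/-! ## Interferometric matrices -/

/-- The projector `P_j` onto component `j`. -/
def Pmat {N : ℕ} (j : Fin N) : Matrix (Fin N) (Fin N) ℂ :=
  Matrix.diagonal (fun a => if a = j then 1 else 0)

/-- The phase-shifter matrix `S_k(ω)`. -/
noncomputable def Smat {N : ℕ} (k : Fin N) (ω : ℝ) : Matrix (Fin N) (Fin N) ℂ :=
  Matrix.diagonal (fun a => if a = k then Complex.exp (Complex.I * (ω : ℂ)) else 1)

/-- The beam-splitter matrix `B_st(R,T)`: identity outside `{s,t}` and
`[[i√R, √T],[√T, i√R]]` on components `{s,t}`. -/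
noncomputable def Bmat {N : ℕ} (s t : Fin N) (R T : ℝ) : Matrix (Fin N) (Fin N) ℂ :=
  Matrix.of fun a b =>
    if a = s then
      (if b = s then Complex.I * (Real.sqrt R : ℂ) else if b = t then (Real.sqrt T : ℂ) else 0)
    else if a = t then
      (if b = s then (Real.sqrt T : ℂ) else if b = t then Complex.I * (Real.sqrt R : ℂ) else 0)
    else if a = b then 1 else 0

/-- The matrix `Δ_τ` selecting the components of maximal strength. -/
noncomputable def Dmat {N : ℕ} (τ : Fin N → ℝ) : Matrix (Fin N) (Fin N) ℂ :=
  Matrix.diagonal (fun j => if τ j = tmax τ then 1 else 0)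

/-- The matrix `Δ^(st)_τ` with `δ_{τ_s,max(τ_s,τ_t)}`, `δ_{τ_t,max(τ_s,τ_t)}` at `s`, `t`
and `1` elsewhere on the diagonal. -/
noncomputable def DmatST {N : ℕ} (τ : Fin N → ℝ) (s t : Fin N) : Matrix (Fin N) (Fin N) ℂ :=
  Matrix.diagonal (fun m =>
    if m = s then (if τ s = max (τ s) (τ t) then 1 else 0)
    else if m = t then (if τ t = max (τ s) (τ t) then 1 else 0)
    else 1)

/-! ## Commutation lemmas -/

lemma commute_diagonal {N : ℕ} (d e : Fin N → ℂ) :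
    Commute (Matrix.diagonal d) (Matrix.diagonal e) := by
  have h : (fun i => d i * e i) = fun i => e i * d i := funext fun i => mul_comm _ _
  show Matrix.diagonal d * Matrix.diagonal e = Matrix.diagonal e * Matrix.diagonal d
  rw [Matrix.diagonal_mul_diagonal, Matrix.diagonal_mul_diagonal, h]

lemma oneSubP_diagonal {N : ℕ} (j : Fin N) :
    (1 : Matrix (Fin N) (Fin N) ℂ) - Pmat j
      = Matrix.diagonal (fun a => 1 - if a = j then 1 else 0) := by
  rw [Pmat, ← Matrix.diagonal_one, Matrix.diagonal_sub]

lemma commute_oneSubP {N : ℕ} (j j' : Fin N) :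
    Commute ((1 : Matrix (Fin N) (Fin N) ℂ) - Pmat j) (1 - Pmat j') := by
  rw [oneSubP_diagonal, oneSubP_diagonal]; exact commute_diagonal _ _

/-- A matrix which differs from the identity only inside the block `{s,t} × {s,t}`. -/
def IsBlock {N : ℕ} (s t : Fin N) (M : Matrix (Fin N) (Fin N) ℂ) : Prop :=
  ∀ a b, ¬((a = s ∨ a = t) ∧ (b = s ∨ b = t)) →
    M a b = (1 : Matrix (Fin N) (Fin N) ℂ) a b

lemma commute_of_isBlock {N : ℕ} {s t s' t' : Fin N} {M M' : Matrix (Fin N) (Fin N) ℂ}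
    (hM : IsBlock s t M) (hM' : IsBlock s' t' M')
    (h1 : s ≠ s') (h2 : s ≠ t') (h3 : t ≠ s') (h4 : t ≠ t') : Commute M M' := by
  have hrow : ∀ a b : Fin N, a ≠ s → a ≠ t → (M - 1) a b = 0 := by
    intro a b ha hb
    have h := hM a b (by tauto)
    simp [Matrix.sub_apply, h]
  have hcol : ∀ a b : Fin N, b ≠ s → b ≠ t → (M - 1) a b = 0 := by
    intro a b hb1 hb2
    have h := hM a b (by tauto)
    simp [Matrix.sub_apply, h]
  have hrow' : ∀ a b : Fin N, a ≠ s' → a ≠ t' → (M' - 1) a b = 0 := by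
    intro a b ha hb
    have h := hM' a b (by tauto)
    simp [Matrix.sub_apply, h]
  have hcol' : ∀ a b : Fin N, b ≠ s' → b ≠ t' → (M' - 1) a b = 0 := by
    intro a b hb1 hb2
    have h := hM' a b (by tauto)
    simp [Matrix.sub_apply, h]
  have hEE' : (M - 1) * (M' - 1) = 0 := by
    ext a b
    rw [Matrix.mul_apply, Matrix.zero_apply]
    apply Finset.sum_eq_zero
    intro k _
    by_cases hk : k = s ∨ k = t
    · have : (M' - 1) k b = 0 := by
        rcases hk with h | h
        · subst h; exact hrow' _ _ h1 h2
        · subst h; exact hrow' _ _ h3 h4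
      rw [this, mul_zero]
    · push_neg at hk
      rw [hcol a k hk.1 hk.2, zero_mul]
  have hE'E : (M' - 1) * (M - 1) = 0 := by
    ext a b
    rw [Matrix.mul_apply, Matrix.zero_apply]
    apply Finset.sum_eq_zero
    intro k _
    by_cases hk : k = s' ∨ k = t'
    · have : (M - 1) k b = 0 := by
        rcases hk with h | h
        · subst h; exact hrow _ _ (Ne.symm h1) (Ne.symm h3)
        · subst h; exact hrow _ _ (Ne.symm h2) (Ne.symm h4)
      rw [this, mul_zero]
    · push_neg at hk
      rw [hcol' a k hk.1 hk.2, zero_mul]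
  have expand : ∀ A B : Matrix (Fin N) (Fin N) ℂ,
      A * B = (A - 1) * (B - 1) + A + B - 1 := by
    intro A B; noncomm_ring
  unfold Commute SemiconjBy
  rw [expand M M', expand M' M, hEE', hE'E]
  abel

lemma isBlock_Bmat {N : ℕ} (s t : Fin N) (R T : ℝ) : IsBlock s t (Bmat s t R T) := by
  intro a b hab
  by_cases has : a = s ∨ a = t
  · have hbs : ¬(b = s ∨ b = t) := fun h => hab ⟨has, h⟩
    push_neg at hbs
    have hb : a ≠ b := by
      rcases has with h | h <;> subst h
      · exact fun hc => hbs.1 hc.symm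
      · exact fun hc => hbs.2 hc.symm
    rw [Matrix.one_apply_ne hb]
    rcases has with h | h <;> subst h <;> simp [Bmat, hbs.1, hbs.2]
  · push_neg at has
    simp [Bmat, Matrix.one_apply, has.1, has.2]

lemma isBlock_one_sub_Pmat {N : ℕ} (j : Fin N) :
    IsBlock j j ((1 : Matrix (Fin N) (Fin N) ℂ) - Pmat j) := by
  intro a b hab
  have haj : a ≠ j ∨ b ≠ j := by tauto
  rw [oneSubP_diagonal]
  by_cases h : a = b
  · subst h
    have haj' : a ≠ j := by tauto
    simp [Matrix.diagonal_apply_eq, Matrix.one_apply_eq, haj']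
  · simp [Matrix.diagonal_apply_ne _ h, Matrix.one_apply_ne h]

lemma isBlock_Smat {N : ℕ} (k : Fin N) (ω : ℝ) : IsBlock k k (Smat k ω) := by
  intro a b hab
  have haj : a ≠ k ∨ b ≠ k := by tauto
  by_cases h : a = b
  · subst h
    have haj' : a ≠ k := by tauto
    simp [Smat, Matrix.diagonal_apply_eq, Matrix.one_apply_eq, haj']
  · simp [Smat, Matrix.diagonal_apply_ne _ h, Matrix.one_apply_ne h]

lemma isBlock_mul_diag {N : ℕ} (s t : Fin N) (M : Matrix (Fin N) (Fin N) ℂ)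
    (hM : IsBlock s t M) (d : Fin N → ℂ) (hd : ∀ m, m ≠ s → m ≠ t → d m = 1) :
    IsBlock s t (M * Matrix.diagonal d) := by
  intro a b hab
  rw [Matrix.mul_diagonal, hM a b hab]
  by_cases h : a = b
  · subst h
    have h1 : a ≠ s := fun hc => hab ⟨Or.inl hc, Or.inl hc⟩
    have h2 : a ≠ t := fun hc => hab ⟨Or.inr hc, Or.inr hc⟩
    rw [Matrix.one_apply_eq, hd a h1 h2, mul_one]
  · rw [Matrix.one_apply_ne h, zero_mul]

lemma isBlock_BmatD {N : ℕ} (s t : Fin N) (R T : ℝ) (τ : Fin N → ℝ) :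
    IsBlock s t (Bmat s t R T * DmatST τ s t) := by
  unfold DmatST
  refine isBlock_mul_diag s t _ (isBlock_Bmat s t R T) _ ?_
  intro m h1 h2
  simp [h1, h2]

/-! ## The matrix `W` of the configuration -/

noncomputable def Dprod {N : ℕ} (c : Config N) : Matrix (Fin N) (Fin N) ℂ :=
  c.De.noncommProd (fun j => 1 - Pmat j) (fun _ _ _ _ _ => commute_oneSubP _ _)

noncomputable def Sprod {N : ℕ} (c : Config N) : Matrix (Fin N) (Fin N) ℂ :=
  c.Sh.noncommProd (fun k => Smat k (c.ω k)) (fun _ _ _ _ _ => commute_diagonal _ _)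

noncomputable def Bprod {N : ℕ} (c : Config N) : Matrix (Fin N) (Fin N) ℂ :=
  c.Bs.noncommProd (fun p => Bmat p.1 p.2 (c.R p) (c.T p))
    (fun p hp q hq hpq => by
      obtain ⟨h1, h2, h3, h4⟩ := c.hBB p hp q hq hpq
      exact commute_of_isBlock (isBlock_Bmat _ _ _ _) (isBlock_Bmat _ _ _ _) h1 h2 h3 h4)

/-- The matrix `W = ∏_{j∈D}(1−P_j) ∏_{k∈S} S_k(ω_k) ∏_{{s,t}∈B} B_st(R_st,T_st)`. -/
noncomputable def Wmat {N : ℕ} (c : Config N) : Matrix (Fin N) (Fin N) ℂ :=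
  Dprod c * Sprod c * Bprod c

/-- The vector `W z`. -/
noncomputable def Wvec {N : ℕ} (c : Config N) (z : Fin N → ℂ) : Fin N → ℂ :=
  (Wmat c).mulVec z

/-- The product `∏_{{s,t}∈B} (B_st(R_st,T_st) Δ^(st)_τ)`. -/
noncomputable def BDprod {N : ℕ} (c : Config N) (τ : Fin N → ℝ) : Matrix (Fin N) (Fin N) ℂ :=
  c.Bs.noncommProd (fun p => Bmat p.1 p.2 (c.R p) (c.T p) * DmatST τ p.1 p.2)
    (fun p hp q hq hpq => by
      obtain ⟨h1, h2, h3, h4⟩ := c.hBB p hp q hq hpq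
      exact commute_of_isBlock (isBlock_BmatD _ _ _ _ _) (isBlock_BmatD _ _ _ _ _) h1 h2 h3 h4)


/-! ## Auxiliary lemmas for the matrix identity -/

lemma le_tmax {N : ℕ} (τ : Fin N → ℝ) (j : Fin N) : τ j ≤ tmax τ :=
  le_ciSup (Set.Finite.bddAbove (Set.finite_range τ)) j

/-- Row `a` and column `a` of `M` agree with the identity. -/
def RowColId {N : ℕ} (a : Fin N) (M : Matrix (Fin N) (Fin N) ℂ) : Prop :=
  (∀ b, M a b = (1 : Matrix (Fin N) (Fin N) ℂ) a b) ∧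
  (∀ b, M b a = (1 : Matrix (Fin N) (Fin N) ℂ) b a)

lemma rowColId_one {N : ℕ} (a : Fin N) : RowColId a (1 : Matrix (Fin N) (Fin N) ℂ) :=
  ⟨fun _ => rfl, fun _ => rfl⟩

lemma rowColId_mul {N : ℕ} {a : Fin N} {M M' : Matrix (Fin N) (Fin N) ℂ}
    (h : RowColId a M) (h' : RowColId a M') : RowColId a (M * M') := by
  constructor
  · intro b
    rw [Matrix.mul_apply]
    calc ∑ k, M a k * M' k b
        = ∑ k, (1 : Matrix (Fin N) (Fin N) ℂ) a k * M' k b :=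
          Finset.sum_congr rfl fun k _ => by rw [h.1 k]
      _ = ((1 : Matrix (Fin N) (Fin N) ℂ) * M') a b := (Matrix.mul_apply).symm
      _ = M' a b := by rw [Matrix.one_mul]
      _ = (1 : Matrix (Fin N) (Fin N) ℂ) a b := h'.1 b
  · intro b
    rw [Matrix.mul_apply]
    calc ∑ k, M b k * M' k a
        = ∑ k, M b k * (1 : Matrix (Fin N) (Fin N) ℂ) k a :=
          Finset.sum_congr rfl fun k _ => by rw [h'.2 k]
      _ = (M * (1 : Matrix (Fin N) (Fin N) ℂ)) b a := (Matrix.mul_apply).symm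
      _ = M b a := by rw [Matrix.mul_one]
      _ = (1 : Matrix (Fin N) (Fin N) ℂ) b a := h.2 b

lemma rowColId_noncommProd {N : ℕ} {ι : Type*} (s : Finset ι)
    (f : ι → Matrix (Fin N) (Fin N) ℂ) (comm) (a : Fin N)
    (h : ∀ x ∈ s, RowColId a (f x)) : RowColId a (s.noncommProd f comm) :=
  Finset.noncommProd_induction s f comm (RowColId a) (fun _ _ => rowColId_mul)
    (rowColId_one a) h

lemma rowColId_of_isBlock {N : ℕ} {s t a : Fin N} {M : Matrix (Fin N) (Fin N) ℂ}
    (hM : IsBlock s t M) (h1 : a ≠ s) (h2 : a ≠ t) : RowColId a M :=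
  ⟨fun b => hM a b (by tauto), fun b => hM b a (by tauto)⟩

lemma isBlock_row_zero {N : ℕ} {s t : Fin N} {M : Matrix (Fin N) (Fin N) ℂ}
    (hM : IsBlock s t M) {a : Fin N} (ha : a = s ∨ a = t) :
    ∀ k, k ≠ s → k ≠ t → M a k = 0 := by
  intro k hk1 hk2
  have h := hM a k (by tauto)
  rw [h, Matrix.one_apply_ne]
  rintro rfl
  rcases ha with rfl | rfl
  · exact hk1 rfl
  · exact hk2 rfl

lemma block_row_mul {N : ℕ} {s t a : Fin N} {M R : Matrix (Fin N) (Fin N) ℂ}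
    (hz : ∀ k, k ≠ s → k ≠ t → M a k = 0)
    (hs : RowColId s R) (ht : RowColId t R) (b : Fin N) :
    (M * R) a b = M a b := by
  rw [Matrix.mul_apply]
  calc ∑ k, M a k * R k b
      = ∑ k, M a k * (1 : Matrix (Fin N) (Fin N) ℂ) k b := by
        refine Finset.sum_congr rfl fun k _ => ?_
        by_cases hk1 : k = s
        · subst hk1; rw [hs.1 b]
        · by_cases hk2 : k = t
          · subst hk2; rw [ht.1 b]
          · rw [hz k hk1 hk2, zero_mul, zero_mul]
    _ = (M * (1 : Matrix (Fin N) (Fin N) ℂ)) a b := (Matrix.mul_apply).symm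
    _ = M a b := by rw [Matrix.mul_one]

lemma noncommProd_diagonal {N : ℕ} {ι : Type*} (s : Finset ι) (g : ι → Fin N → ℂ) :
    ∀ comm, s.noncommProd (fun x => Matrix.diagonal (g x)) comm
      = Matrix.diagonal (fun m => ∏ x ∈ s, g x m) := by
  induction s using Finset.cons_induction with
  | empty => intro comm; simp
  | cons x s hx ih =>
      intro comm
      rw [Finset.noncommProd_cons, ih _, Matrix.diagonal_mul_diagonal]
      exact congrArg Matrix.diagonal (funext fun m => by rw [Finset.prod_cons])

lemma Dprod_eq {N : ℕ} (c : Config N) :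
    Dprod c = Matrix.diagonal (fun m => if m ∈ c.De then (0 : ℂ) else 1) := by
  have h1 : Dprod c = c.De.noncommProd
      (fun j => Matrix.diagonal (fun a => 1 - if a = j then (1 : ℂ) else 0))
      (fun _ _ _ _ _ => commute_diagonal _ _) := by
    unfold Dprod
    exact Finset.noncommProd_congr rfl (fun j _ => oneSubP_diagonal j) _
  rw [h1]; refine (noncommProd_diagonal _ _ _).trans ?_
  refine congrArg Matrix.diagonal (funext fun m => ?_)
  by_cases hm : m ∈ c.De
  · rw [if_pos hm]
    exact Finset.prod_eq_zero hm (by simp)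
  · rw [if_neg hm]
    refine Finset.prod_eq_one fun j hj => ?_
    have : m ≠ j := fun h => hm (h ▸ hj)
    simp [this]

lemma Sprod_eq {N : ℕ} (c : Config N) :
    Sprod c = Matrix.diagonal
      (fun m => if m ∈ c.Sh then Complex.exp (Complex.I * (c.ω m : ℂ)) else 1) := by
  unfold Sprod Smat
  refine (noncommProd_diagonal _ _ _).trans ?_
  refine congrArg Matrix.diagonal (funext fun m => ?_)
  by_cases hm : m ∈ c.Sh
  · rw [if_pos hm,
      Finset.prod_eq_single_of_mem m hm (fun k _ hkm => by simp [Ne.symm hkm]), if_pos rfl]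
  · rw [if_neg hm]
    refine Finset.prod_eq_one fun j hj => ?_
    have : m ≠ j := fun h => hm (h ▸ hj)
    simp [this]

/-- Matrix identity, Eq. (48).
`Δ_τ' (∏_{k∈S} S_k ∏_{{s,t}∈B} B_st Δ^(st)_τ) = (∏_{j∈D}(1−P_j) ∏_{k∈S} S_k ∏_{{s,t}∈B} B_st) Δ_τ`. -/
theorem matrix_identity {N : ℕ} (c : Config N) (τ : Fin N → ℝ)
    (hτ : ∀ j, τ j ∈ Set.Icc (0 : ℝ) 1) (i : Fin N) (hiD : i ∉ c.De)
    (hi : τ i = tmax τ) (hpos : 0 < tmax τ) (τ' : Fin N → ℝ)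
    (hF : ∀ l ∈ c.Fr, τ' l = τ l / 2) (hS : ∀ k ∈ c.Sh, τ' k = τ k / 2)
    (hD : ∀ j ∈ c.De, τ' j = 0)
    (hB : ∀ p ∈ c.Bs, τ' p.1 = max (τ p.1) (τ p.2) / 2 ∧ τ' p.2 = max (τ p.1) (τ p.2) / 2) :
    Dmat τ' * (Sprod c * BDprod c τ) = Wmat c * Dmat τ := by
  have hne : Nonempty (Fin N) := ⟨i⟩
  have hle : ∀ j, τ j ≤ tmax τ := le_tmax τ
  have hub : ∀ j, τ' j ≤ tmax τ / 2 := by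
    intro j
    rcases c.hcover j with hj | hj | hj | ⟨p, hp, hj⟩
    · rw [hF j hj]; linarith [hle j]
    · rw [hD j hj]; linarith
    · rw [hS j hj]; linarith [hle j]
    · have hm : max (τ p.1) (τ p.2) ≤ tmax τ := max_le (hle p.1) (hle p.2)
      rcases hj with rfl | rfl
      · rw [(hB p hp).1]; linarith
      · rw [(hB p hp).2]; linarith
  have hatt : ∃ j, τ' j = tmax τ / 2 := by
    rcases c.hcover i with hi' | hi' | hi' | ⟨p, hp, hi'⟩
    · exact ⟨i, by rw [hF i hi', hi]⟩
    · exact absurd hi' hiD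
    · exact ⟨i, by rw [hS i hi', hi]⟩
    · have hm : max (τ p.1) (τ p.2) = tmax τ := by
        refine le_antisymm (max_le (hle p.1) (hle p.2)) ?_
        rcases hi' with rfl | rfl
        · exact le_trans (le_of_eq hi.symm) (le_max_left _ _)
        · exact le_trans (le_of_eq hi.symm) (le_max_right _ _)
      rcases hi' with rfl | rfl
      · exact ⟨p.1, by rw [(hB p hp).1, hm]⟩
      · exact ⟨p.2, by rw [(hB p hp).2, hm]⟩
  have hmax' : tmax τ' = tmax τ / 2 := by
    obtain ⟨j, hj⟩ := hatt
    refine le_antisymm (ciSup_le hub) ?_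
    rw [← hj]
    exact le_tmax τ' j
  -- the per-entry key identity (with the phase-shifter factor stripped off)
  have key : ∀ a b,
      (if τ' a = tmax τ' then (1 : ℂ) else 0) * BDprod c τ a b
      = (if a ∈ c.De then (0 : ℂ) else 1) *
        (Bprod c a b * (if τ b = tmax τ then (1 : ℂ) else 0)) := by
    have freeCase : ∀ a b, τ' a = τ a / 2 → a ∉ c.De →
        (∀ p ∈ c.Bs, a ≠ p.1 ∧ a ≠ p.2) →
        (if τ' a = tmax τ' then (1 : ℂ) else 0) * BDprod c τ a b
        = (if a ∈ c.De then (0 : ℂ) else 1) *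
          (Bprod c a b * (if τ b = tmax τ then (1 : ℂ) else 0)) := by
      intro a b hτa haD hnotB
      have hBD : BDprod c τ a b = (1 : Matrix (Fin N) (Fin N) ℂ) a b :=
        (rowColId_noncommProd _ _ _ a (fun p hp =>
          rowColId_of_isBlock (isBlock_BmatD p.1 p.2 (c.R p) (c.T p) τ)
            (hnotB p hp).1 (hnotB p hp).2)).1 b
      have hBp : Bprod c a b = (1 : Matrix (Fin N) (Fin N) ℂ) a b :=
        (rowColId_noncommProd _ _ _ a (fun p hp =>
          rowColId_of_isBlock (isBlock_Bmat p.1 p.2 (c.R p) (c.T p))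
            (hnotB p hp).1 (hnotB p hp).2)).1 b
      rw [hBD, hBp, if_neg haD, one_mul]
      by_cases hab : a = b
      · subst hab
        rw [Matrix.one_apply_eq, hmax', hτa, mul_one]
        by_cases h : τ a = tmax τ
        · have h2 : τ a / 2 = tmax τ / 2 := by linarith
          simp [h, h2]
        · have h2 : ¬(τ a / 2 = tmax τ / 2) := fun hc => h (by linarith)
          simp [h, h2]
      · rw [Matrix.one_apply_ne hab]; ring
    intro a b
    rcases c.hcover a with ha | ha | ha | ⟨p, hp, ha⟩
    · exact freeCase a b (hF a ha) (Finset.disjoint_left.mp c.hFD ha)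
        (fun p hp => ⟨fun h => (c.hBdisj p hp).1 (h ▸ ha),
                      fun h => (c.hBdisj p hp).2.1 (h ▸ ha)⟩)
    · -- a is a detector path
      have h1 : τ' a ≠ tmax τ' := by
        rw [hD a ha, hmax']
        intro h; linarith
      rw [if_neg h1, if_pos ha]; ring
    · exact freeCase a b (hS a ha) (Finset.disjoint_right.mp c.hDS ha)
        (fun p hp => ⟨fun h => (c.hBdisj p hp).2.2.2.2.1 (h ▸ ha),
                      fun h => (c.hBdisj p hp).2.2.2.2.2 (h ▸ ha)⟩)
    · -- a enters the beam splitter p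
      have haD : a ∉ c.De := by
        rcases ha with rfl | rfl
        · exact (c.hBdisj p hp).2.2.1
        · exact (c.hBdisj p hp).2.2.2.1
      have hrest : ∀ m, (m = p.1 ∨ m = p.2) → ∀ (f : Fin N × Fin N → Matrix (Fin N) (Fin N) ℂ),
          (∀ q ∈ c.Bs, IsBlock q.1 q.2 (f q)) → ∀ comm,
          RowColId m ((c.Bs.erase p).noncommProd f comm) := by
        intro m hm f hblock comm
        refine rowColId_noncommProd _ _ _ m fun q hq => ?_
        have hq' : q ∈ c.Bs := Finset.mem_of_mem_erase hq
        have hqp : q ≠ p := Finset.ne_of_mem_erase hq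
        obtain ⟨g1, g2, g3, g4⟩ := c.hBB q hq' p hp hqp
        refine rowColId_of_isBlock (hblock q hq') ?_ ?_
        · rcases hm with rfl | rfl
          · exact fun h => g1 h.symm
          · exact fun h => g2 h.symm
        · rcases hm with rfl | rfl
          · exact fun h => g3 h.symm
          · exact fun h => g4 h.symm
      have hBDsplit : BDprod c τ =
          (Bmat p.1 p.2 (c.R p) (c.T p) * DmatST τ p.1 p.2) *
            (c.Bs.erase p).noncommProd
              (fun q => Bmat q.1 q.2 (c.R q) (c.T q) * DmatST τ q.1 q.2)
              (fun q hq r hr hqr => by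
                obtain ⟨h1, h2, h3, h4⟩ := c.hBB q (Finset.mem_of_mem_erase hq)
                  r (Finset.mem_of_mem_erase hr) hqr
                exact commute_of_isBlock (isBlock_BmatD _ _ _ _ _)
                  (isBlock_BmatD _ _ _ _ _) h1 h2 h3 h4) :=
        (Finset.mul_noncommProd_erase c.Bs hp _ _).symm
      have hBsplit : Bprod c =
          Bmat p.1 p.2 (c.R p) (c.T p) *
            (c.Bs.erase p).noncommProd
              (fun q => Bmat q.1 q.2 (c.R q) (c.T q))
              (fun q hq r hr hqr => by
                obtain ⟨h1, h2, h3, h4⟩ := c.hBB q (Finset.mem_of_mem_erase hq)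
                  r (Finset.mem_of_mem_erase hr) hqr
                exact commute_of_isBlock (isBlock_Bmat _ _ _ _)
                  (isBlock_Bmat _ _ _ _) h1 h2 h3 h4) :=
        (Finset.mul_noncommProd_erase c.Bs hp _ _).symm
      have hBDa : BDprod c τ a b = (Bmat p.1 p.2 (c.R p) (c.T p) * DmatST τ p.1 p.2) a b := by
        rw [hBDsplit]
        exact block_row_mul
          (isBlock_row_zero (isBlock_BmatD p.1 p.2 (c.R p) (c.T p) τ) ha)
          (hrest p.1 (Or.inl rfl) _ (fun q hq => isBlock_BmatD _ _ _ _ _) _)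
          (hrest p.2 (Or.inr rfl) _ (fun q hq => isBlock_BmatD _ _ _ _ _) _) b
      have hBa : Bprod c a b = Bmat p.1 p.2 (c.R p) (c.T p) a b := by
        rw [hBsplit]
        exact block_row_mul
          (isBlock_row_zero (isBlock_Bmat p.1 p.2 (c.R p) (c.T p)) ha)
          (hrest p.1 (Or.inl rfl) _ (fun q hq => isBlock_Bmat _ _ _ _) _)
          (hrest p.2 (Or.inr rfl) _ (fun q hq => isBlock_Bmat _ _ _ _) _) b
      rw [hBDa, hBa, if_neg haD, one_mul]
      have hτ'a : τ' a = max (τ p.1) (τ p.2) / 2 := by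
        rcases ha with rfl | rfl
        · exact (hB p hp).1
        · exact (hB p hp).2
      rw [DmatST, Matrix.mul_diagonal, hτ'a, hmax']
      set mx := max (τ p.1) (τ p.2) with hmxdef
      have hmx_le : mx ≤ tmax τ := max_le (hle p.1) (hle p.2)
      have hcond : (if mx / 2 = tmax τ / 2 then (1 : ℂ) else 0)
          = (if mx = tmax τ then (1 : ℂ) else 0) := by
        by_cases h : mx = tmax τ
        · have h2 : mx / 2 = tmax τ / 2 := by linarith
          simp [h, h2]
        · have h2 : ¬(mx / 2 = tmax τ / 2) := fun hc => h (by linarith)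
          simp [h, h2]
      rw [hcond]
      have hst : p.1 ≠ p.2 := c.hst p hp
      by_cases hb1 : b = p.1
      · subst hb1
        rw [if_pos rfl]
        have hsc : (if mx = tmax τ then (1 : ℂ) else 0) * (if τ p.1 = mx then (1 : ℂ) else 0)
            = (if τ p.1 = tmax τ then (1 : ℂ) else 0) := by
          by_cases h1 : τ p.1 = tmax τ
          · have hm : mx = tmax τ :=
              le_antisymm hmx_le (le_trans (le_of_eq h1.symm) (le_max_left _ _))
            have h2 : τ p.1 = mx := h1.trans hm.symm
            simp [h1, hm, h2]
          · by_cases hm : mx = tmax τ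
            · have h2 : τ p.1 ≠ mx := fun hc => h1 (hc.trans hm)
              simp [h1, hm, h2]
            · simp [h1, hm]
        calc (if mx = tmax τ then (1 : ℂ) else 0) *
              (Bmat p.1 p.2 (c.R p) (c.T p) a p.1 * (if τ p.1 = mx then 1 else 0))
            = Bmat p.1 p.2 (c.R p) (c.T p) a p.1 *
              ((if mx = tmax τ then (1 : ℂ) else 0) * (if τ p.1 = mx then 1 else 0)) := by ring
          _ = _ := by rw [hsc]
      · by_cases hb2 : b = p.2
        · subst hb2
          rw [if_neg (Ne.symm hst), if_pos rfl]
          have hsc : (if mx = tmax τ then (1 : ℂ) else 0) * (if τ p.2 = mx then (1 : ℂ) else 0)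
              = (if τ p.2 = tmax τ then (1 : ℂ) else 0) := by
            by_cases h1 : τ p.2 = tmax τ
            · have hm : mx = tmax τ :=
                le_antisymm hmx_le (le_trans (le_of_eq h1.symm) (le_max_right _ _))
              have h2 : τ p.2 = mx := h1.trans hm.symm
              simp [h1, hm, h2]
            · by_cases hm : mx = tmax τ
              · have h2 : τ p.2 ≠ mx := fun hc => h1 (hc.trans hm)
                simp [h1, hm, h2]
              · simp [h1, hm]
          calc (if mx = tmax τ then (1 : ℂ) else 0) *
                (Bmat p.1 p.2 (c.R p) (c.T p) a p.2 * (if τ p.2 = mx then 1 else 0))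
              = Bmat p.1 p.2 (c.R p) (c.T p) a p.2 *
                ((if mx = tmax τ then (1 : ℂ) else 0) * (if τ p.2 = mx then 1 else 0)) := by ring
            _ = _ := by rw [hsc]
        · rw [if_neg hb1, if_neg hb2]
          have hz : Bmat p.1 p.2 (c.R p) (c.T p) a b = 0 :=
            isBlock_row_zero (isBlock_Bmat p.1 p.2 (c.R p) (c.T p)) ha b hb1 hb2
          rw [hz]; ring
  ext a b
  have L : (Dmat τ' * (Sprod c * BDprod c τ)) a b
      = (if a ∈ c.Sh then Complex.exp (Complex.I * (c.ω a : ℂ)) else 1) *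
        ((if τ' a = tmax τ' then (1 : ℂ) else 0) * BDprod c τ a b) := by
    rw [Dmat, Matrix.diagonal_mul, Sprod_eq, Matrix.diagonal_mul]
    ring
  have R : (Wmat c * Dmat τ) a b
      = (if a ∈ c.Sh then Complex.exp (Complex.I * (c.ω a : ℂ)) else 1) *
        ((if a ∈ c.De then (0 : ℂ) else 1) *
          (Bprod c a b * (if τ b = tmax τ then (1 : ℂ) else 0))) := by
    rw [Wmat, Dmat, Matrix.mul_diagonal, Dprod_eq, Sprod_eq, Matrix.diagonal_mul_diagonal,
      Matrix.diagonal_mul]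
    ring
  rw [L, R, key a b]


end SPI
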